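/- Let G be a connected graph with a simple tree structure (Γ = [V_1,…,V_k], T): each s_G(V_i,V_j) ∈ {0,1} for i ≠ j, and T (the quotient graph on [k] with edges where s_G(V_i,V_j)=1) is a tree. Suppose A is a connected induced subgraph of G whose vertex set is not contained in any single part V_i. Then A has a bridge. -/

import Mathlib

open scoped Classical

/-- `sG G U W` is the number of edges of `G` with one endpoint in `U` and the other in `W`. -/
noncomputable def sG {V : Type} (G : SimpleGraph V) (U W : Set V) : ℕ :=
  Set.ncard {e : Sym2 V | e ∈ G.edgeSet ∧ ∃ a ∈ U, ∃ b ∈ W, e = s(a, b)}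

private lemma exists_adj_ne_aux {V α : Type*} {G : SimpleGraph V} (f : V → α) :
    ∀ {u v : V}, G.Walk u v → f u ≠ f v → ∃ x y, G.Adj x y ∧ f x ≠ f y := by
  intro u v w
  induction w with
  | nil => exact fun h => absurd rfl h
  | @cons a b c hadj p ih =>
    intro h
    by_cases hab : f a = f b
    · exact ih (hab ▸ h)
    · exact ⟨a, b, hadj, hab⟩

theorem bridge_of_not_in_one_part {V : Type} [Fintype V] (G : SimpleGraph V)
    (hG : G.Connected) (k : ℕ) (P : Fin k → Set V)
    (hdisj : ∀ i j, i ≠ j → Disjoint (P i) (P j))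
    (hcover : (⋃ i, P i) = Set.univ)
    (hs : ∀ i j, i ≠ j → sG G (P i) (P j) ≤ 1)
    (htree : (SimpleGraph.fromRel (fun i j => sG G (P i) (P j) = 1)).IsTree)
    (A : Set V) (hA : (G.induce A).Connected)
    (hnot : ¬ ∃ i, A ⊆ P i) :
    ∃ e, (G.induce A).IsBridge e := by
  classical
  -- the part function
  have hpart : ∀ v : V, ∃ i, v ∈ P i := by
    intro v
    have hv : v ∈ ⋃ i, P i := hcover ▸ Set.mem_univ v
    simpa using hv
  choose part hpartmem using hpart
  -- uniqueness of cross edges between two fixed parts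
  have huniq : ∀ i j, i ≠ j → ∀ x y x' y' : V, G.Adj x y → G.Adj x' y' →
      x ∈ P i → y ∈ P j → x' ∈ P i → y' ∈ P j → s(x, y) = s(x', y') := by
    intro i j hij x y x' y' hxy hxy' hx hy hx' hy'
    have hle := hs i j hij
    rw [sG] at hle
    have h1 : s(x, y) ∈ {e : Sym2 V | e ∈ G.edgeSet ∧ ∃ a ∈ P i, ∃ b ∈ P j, e = s(a, b)} :=
      ⟨hxy, x, hx, y, hy, rfl⟩
    have h2 : s(x', y') ∈ {e : Sym2 V | e ∈ G.edgeSet ∧ ∃ a ∈ P i, ∃ b ∈ P j, e = s(a, b)} :=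
      ⟨hxy', x', hx', y', hy', rfl⟩
    exact (Set.ncard_le_one (Set.toFinite _)).mp hle _ h1 _ h2
  -- sG = 1 for any pair of parts joined by an edge
  have hsG1 : ∀ i j, i ≠ j → ∀ x y : V, G.Adj x y → x ∈ P i → y ∈ P j →
      sG G (P i) (P j) = 1 := by
    intro i j hij x y hxy hx hy
    refine le_antisymm (hs i j hij) ?_
    have h1 : s(x, y) ∈ {e : Sym2 V | e ∈ G.edgeSet ∧ ∃ a ∈ P i, ∃ b ∈ P j, e = s(a, b)} :=
      ⟨hxy, x, hx, y, hy, rfl⟩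
    rw [sG]
    have hpos : 0 < {e : Sym2 V | e ∈ G.edgeSet ∧ ∃ a ∈ P i, ∃ b ∈ P j, e = s(a, b)}.ncard :=
      (Set.ncard_pos (Set.toFinite _)).mpr ⟨_, h1⟩
    omega
  -- find a crossing edge of the induced subgraph
  obtain ⟨a⟩ := hA.nonempty
  have hAnot : ¬ A ⊆ P (part ↑a) := fun h => hnot ⟨_, h⟩
  obtain ⟨b, hbA, hbP⟩ := Set.not_subset.mp hAnot
  have hpb : part ↑a ≠ part b := fun h => hbP (h ▸ hpartmem b)
  obtain ⟨w⟩ := hA.preconnected a ⟨b, hbA⟩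
  obtain ⟨x, y, hxy, hfxy⟩ := exists_adj_ne_aux (fun z : A => part ↑z) w hpb
  set i := part (↑x : V) with hi
  set j := part (↑y : V) with hj
  set u : V := ↑x with hu
  set v : V := ↑y with hv
  have huv : G.Adj u v := by
    have := hxy
    rw [SimpleGraph.comap_adj] at this
    exact this
  set T := SimpleGraph.fromRel (fun i j => sG G (P i) (P j) = 1) with hT
  have hTadj : T.Adj i j := by
    rw [hT, SimpleGraph.fromRel_adj]
    exact ⟨hfxy, Or.inl (hsG1 i j hfxy u v huv (hpartmem u) (hpartmem v))⟩
  have hbr : T.IsBridge s(i, j) :=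
    (SimpleGraph.isAcyclic_iff_forall_edge_isBridge.mp htree.2) ((T.mem_edgeSet).mpr hTadj)
  have hjnr : ¬ (T \ SimpleGraph.fromEdgeSet {s(i, j)}).Reachable i j :=
    SimpleGraph.isBridge_iff.mp hbr
  set S : Fin k → Prop := fun t => (T \ SimpleGraph.fromEdgeSet {s(i, j)}).Reachable i t with hS
  -- membership in S is preserved by edges of G minus the bridge
  have key : ∀ p q : V, (G \ SimpleGraph.fromEdgeSet {s(u, v)}).Adj p q →
      S (part p) → S (part q) := by
    intro p q hpq hpS
    rw [SimpleGraph.sdiff_adj, SimpleGraph.fromEdgeSet_adj] at hpq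
    obtain ⟨hGpq, hne2⟩ := hpq
    have hnepq : s(p, q) ≠ s(u, v) := fun h => hne2 ⟨by simp [h], hGpq.ne⟩
    by_cases hpp : part p = part q
    · exact hpp ▸ hpS
    · have hTpq : T.Adj (part p) (part q) := by
        rw [hT, SimpleGraph.fromRel_adj]
        exact ⟨hpp, Or.inl (hsG1 _ _ hpp p q hGpq (hpartmem p) (hpartmem q))⟩
      by_cases hcase : s(part p, part q) = s(i, j)
      · rcases Sym2.eq_iff.mp hcase with ⟨hpi, hqj⟩ | ⟨hpj, hqi⟩
        · exact absurd (huniq i j hfxy p q u v hGpq huv (hpi ▸ hpartmem p)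
            (hqj ▸ hpartmem q) (hpartmem u) (hpartmem v)) hnepq
        · rw [hpj] at hpS
          exact absurd hpS hjnr
      · have hT' : (T \ SimpleGraph.fromEdgeSet {s(i, j)}).Adj (part p) (part q) := by
          rw [SimpleGraph.sdiff_adj, SimpleGraph.fromEdgeSet_adj]
          exact ⟨hTpq, fun h => hcase (by simpa using h.1)⟩
        exact hpS.trans hT'.reachable
  have hclo : ∀ {p q : V}, (G \ SimpleGraph.fromEdgeSet {s(u, v)}).Walk p q →
      S (part p) → S (part q) := by
    intro p q w
    induction w with
    | nil => exact id
    | cons h pw ih => exact fun hp => ih (key _ _ h hp)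
  -- the crossing edge is a bridge of the induced subgraph
  refine ⟨s(x, y), ?_⟩
  rw [SimpleGraph.isBridge_iff]
  refine fun hreach => ?_
  have hmap : ∀ {c d : ↥A}, ((G.induce A) \ SimpleGraph.fromEdgeSet {s(x, y)}).Adj c d →
      (G \ SimpleGraph.fromEdgeSet {s(u, v)}).Adj ↑c ↑d := by
    intro c d hcd
    rw [SimpleGraph.sdiff_adj, SimpleGraph.fromEdgeSet_adj] at hcd ⊢
    obtain ⟨h1, h2⟩ := hcd
    have h1' : G.Adj ↑c ↑d := by rw [SimpleGraph.comap_adj] at h1; exact h1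
    refine ⟨h1', ?_⟩
    rintro ⟨heq, hne3⟩
    apply h2
    simp only [Set.mem_singleton_iff] at heq
    refine ⟨?_, fun hcd' => hne3 (congrArg Subtype.val hcd')⟩
    simp only [Set.mem_singleton_iff]
    rcases Sym2.eq_iff.mp heq with ⟨hc, hd⟩ | ⟨hc, hd⟩
    · rw [Subtype.ext hc, Subtype.ext hd]
    · rw [Subtype.ext hc, Subtype.ext hd, Sym2.eq_swap]
  have hreach' : (G \ SimpleGraph.fromEdgeSet {s(u, v)}).Reachable u v :=
    hreach.map ⟨Subtype.val, fun h => hmap h⟩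
  obtain ⟨w'⟩ := hreach'
  exact hjnr (hclo w' (SimpleGraph.Reachable.refl i))
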